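/- Consider generalised scale-free percolation SFP on ℤ^d with an arbitrary vertex-weight distribution W ≥ 1 and a connection function h satisfying the edge-connection bounds with long-range parameter α ∈ (0,1]. Suppose the penalty function f has the property that there exist intervals [a,b] and [c,d] with P(W ∈ [a,b])·P(W ∈ [c,d]) > 0 and a constant K < ∞ such that f(w₁,w₂) < K whenever w₁ ∈ [a,b] and w₂ ∈ [c,d]. Then, for an arbitrary edge-length distribution L ≥ 0, the model is (f,L)-explosive; moreover, there exists T < ∞ such that with positive probability the origin is incident to infinitely many edges of cost at most T. -/

import Mathlib

open MeasureTheory ProbabilityTheory Filter Set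
open scoped ENNReal NNReal

noncomputable section

namespace SFP

/-- Euclidean norm on `ℝ^d` (realised as `Fin d → ℝ`). -/
def rnorm {d : ℕ} (x : Fin d → ℝ) : ℝ := Real.sqrt (∑ i, x i ^ 2)

/-- Euclidean norm of an integer vector in `ℤ^d`. -/
def znorm {d : ℕ} (x : Fin d → ℤ) : ℝ := rnorm fun i => (x i : ℝ)

/-- A function varies slowly at infinity. -/
def SlowlyVarying (l : ℝ → ℝ) : Prop :=
  ∀ c : ℝ, 0 < c → Tendsto (fun x => l (c * x) / l x) atTop (nhds 1)

/-- `l(w) = exp (-c₂ (log w)^γ)`. -/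
def lfun (c₂ γ w : ℝ) : ℝ := Real.exp (-c₂ * Real.log w ^ γ)

/-- Edge-connection bounds, with explicit constants, for long-range parameter `α ∈ (0,∞]`. -/
def EdgeBoundsC {d : ℕ} (h : (Fin d → ℝ) → ℝ → ℝ → ℝ) (α : ℝ≥0∞)
    (γ cl cu cl1 cu1 c₂ : ℝ) : Prop :=
  γ ∈ Set.Ioo (0 : ℝ) 1 ∧ 0 < cl ∧ 0 < cu ∧ 0 < cl1 ∧ 0 < cu1 ∧ 0 < c₂ ∧
    ((α ≠ ⊤ ∧ ∀ x : Fin d → ℝ, x ≠ 0 → ∀ w₁ w₂ : ℝ, 1 ≤ w₁ → 1 ≤ w₂ →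
        cl * min (lfun c₂ γ w₁ * lfun c₂ γ w₂)
            ((w₁ * w₂ / rnorm x ^ d) ^ α.toReal) ≤ h x w₁ w₂ ∧
          h x w₁ w₂ ≤ cu * min 1 ((w₁ * w₂ / rnorm x ^ d) ^ α.toReal)) ∨
      (α = ⊤ ∧ ∀ x : Fin d → ℝ, x ≠ 0 → ∀ w₁ w₂ : ℝ, 1 ≤ w₁ → 1 ≤ w₂ →
        cl * min (lfun c₂ γ w₁ * lfun c₂ γ w₂)
            (if rnorm x ^ d ≤ cl1 * (w₁ * w₂) then 1 else 0) ≤ h x w₁ w₂ ∧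
          h x w₁ w₂ ≤ cu * (if rnorm x ^ d ≤ cu1 * (w₁ * w₂) then 1 else 0)))

/-- Edge-connection bounds with long-range parameter `α ∈ (0,∞]`. -/
def EdgeBounds {d : ℕ} (h : (Fin d → ℝ) → ℝ → ℝ → ℝ) (α : ℝ≥0∞) : Prop :=
  ∃ γ cl cu cl1 cu1 c₂ : ℝ, EdgeBoundsC h α γ cl cu cl1 cu1 c₂

/-- The random variable `W` has power-law tails with exponent `τ` under `P`. -/
def PowerLawTails {Ω : Type*} [MeasurableSpace Ω] (P : Measure Ω) (W : Ω → ℝ)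
    (τ : ℝ) : Prop :=
  ∃ l : ℝ → ℝ, (∀ x : ℝ, 0 < x → 0 < l x) ∧ SlowlyVarying l ∧
    ∃ x₀ : ℝ, ∀ x : ℝ, x₀ ≤ x → (P {ω | x ≤ W ω}).toReal = l x * x ^ (-(τ - 1))

/-- The ratio `log F(t) / log t`, valued in `[0,∞]` (it equals `∞` when `F t = 0` and
`0 < t < 1`, matching the convention `log 0 = -∞`). -/
def betaRatio (F : ℝ → ℝ) (t : ℝ) : ℝ≥0∞ :=
  (if F t = 0 then ⊤ else ENNReal.ofReal (-Real.log (F t))) / ENNReal.ofReal (-Real.log t)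

/-- `β⁺ = limsup_{t↓0} log F(t)/log t ∈ [0,∞]`. -/
def betaPlus (F : ℝ → ℝ) : ℝ≥0∞ := limsup (betaRatio F) (nhdsWithin 0 (Set.Ioi 0))

/-- `β⁻ = liminf_{t↓0} log F(t)/log t ∈ [0,∞]`. -/
def betaMinus (F : ℝ → ℝ) : ℝ≥0∞ := liminf (betaRatio F) (nhdsWithin 0 (Set.Ioi 0))

/-- All the data of generalised scale-free percolation on `ℤ^d`:
a probability space, prototype weight and length variables `W, L`, a connection
function `h`, i.i.d. vertex weights `Wt`, i.i.d. uniform variables `U` and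
i.i.d. edge lengths `Len` indexed by unordered pairs of vertices. -/
structure Data (d : ℕ) (Ω : Type*) [MeasurableSpace Ω] where
  P : Measure Ω
  W : Ω → ℝ
  L : Ω → ℝ
  h : (Fin d → ℝ) → ℝ → ℝ → ℝ
  Wt : (Fin d → ℤ) → Ω → ℝ
  U : Sym2 (Fin d → ℤ) → Ω → ℝ
  Len : Sym2 (Fin d → ℤ) → Ω → ℝ

/-- Index type for the combined family of basic random variables. -/
inductive Idx (d : ℕ) : Type
  | wt : (Fin d → ℤ) → Idx d
  | unif : Sym2 (Fin d → ℤ) → Idx d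
  | len : Sym2 (Fin d → ℤ) → Idx d

variable {d : ℕ} {Ω : Type*} [MeasurableSpace Ω]

/-- The combined family of basic random variables. -/
def Data.family (M : Data d Ω) : Idx d → Ω → ℝ
  | .wt v => M.Wt v
  | .unif e => M.U e
  | .len e => M.Len e

/-- The model assumptions of generalised scale-free percolation: `P` is a probability
measure; `W ≥ 1` and `L ≥ 0`; `h` takes values in `[0,1]`; the weights are distributed
as `W`, the pair variables are uniform on `[0,1]`, the edge lengths are distributed as
`L`, and all these random variables are mutually independent. -/
def Data.Valid (M : Data d Ω) : Prop :=
  IsProbabilityMeasure M.P ∧ Measurable M.W ∧ Measurable M.L ∧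
    (∀ ω, 1 ≤ M.W ω) ∧ (∀ ω, 0 ≤ M.L ω) ∧
    (∀ x w₁ w₂, M.h x w₁ w₂ ∈ Set.Icc (0 : ℝ) 1) ∧
    (∀ i, Measurable (M.family i)) ∧
    (∀ v ω, 1 ≤ M.Wt v ω) ∧ (∀ e ω, 0 ≤ M.Len e ω) ∧
    (∀ v, Measure.map (M.Wt v) M.P = Measure.map M.W M.P) ∧
    (∀ e : Sym2 (Fin d → ℤ), ¬e.IsDiag →
      Measure.map (M.U e) M.P = volume.restrict (Set.Icc (0 : ℝ) 1)) ∧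
    (∀ e : Sym2 (Fin d → ℤ), ¬e.IsDiag →
      Measure.map (M.Len e) M.P = Measure.map M.L M.P) ∧
    iIndepFun M.family M.P

/-- Adjacency in the random graph at sample point `ω`: nearest-neighbour edges are
always present, and an edge between `u,v` with `‖u-v‖ > 1` is present iff the
attached uniform variable is at most `h (u-v) W_u W_v`. -/
def Data.Adj (M : Data d Ω) (ω : Ω) (u v : Fin d → ℤ) : Prop :=
  znorm (u - v) = 1 ∨
    (1 < znorm (u - v) ∧
      M.U s(u, v) ω ≤ M.h (fun i => ((u - v) i : ℝ)) (M.Wt u ω) (M.Wt v ω))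

/-- Cost of traversing the edge `{u,v}` from `u` to `v`, for penalty function `f`. -/
def Data.cost (M : Data d Ω) (f : ℝ → ℝ → ℝ) (ω : Ω) (u v : Fin d → ℤ) : ℝ :=
  M.Len s(u, v) ω * f (M.Wt u ω) (M.Wt v ω)

/-- `π` restricted to `{0,…,k}` is a self-avoiding path in the graph at `ω`. -/
def Data.IsPathSeg (M : Data d Ω) (ω : Ω) (k : ℕ) (π : ℕ → Fin d → ℤ) : Prop :=
  (∀ i, i < k → M.Adj ω (π i) (π (i + 1))) ∧
    ∀ i j, i ≤ k → j ≤ k → π i = π j → i = j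

/-- Total cost of the first `k` steps of `π`. -/
def Data.pathCost (M : Data d Ω) (f : ℝ → ℝ → ℝ) (ω : Ω) (k : ℕ)
    (π : ℕ → Fin d → ℤ) : ℝ≥0∞ :=
  ∑ i ∈ Finset.range k, ENNReal.ofReal (M.cost f ω (π i) (π (i + 1)))

/-- Cost-distance from `u` to `v`: the infimum of costs of paths from `u` to `v`. -/
def Data.costDist (M : Data d Ω) (f : ℝ → ℝ → ℝ) (ω : Ω) (u v : Fin d → ℤ) : ℝ≥0∞ :=
  ⨅ (k : ℕ) (π : ℕ → Fin d → ℤ) (_ : π 0 = u) (_ : π k = v)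
    (_ : M.IsPathSeg ω k π), M.pathCost f ω k π

/-- Explosion time `Y_f(v) = lim_{k→∞} inf { t : |B^{f,L}(v,t)| > k }`. -/
def Data.explosionTime (M : Data d Ω) (f : ℝ → ℝ → ℝ) (ω : Ω) (v : Fin d → ℤ) : ℝ≥0∞ :=
  ⨆ k : ℕ, sInf {t : ℝ≥0∞ |
    ∃ S : Finset (Fin d → ℤ), k < S.card ∧ ∀ u ∈ S, M.costDist f ω v u ≤ t}

/-- `π` is an infinite self-avoiding path starting at `v₀` in the graph at `ω`. -/
def Data.InfPath (M : Data d Ω) (ω : Ω) (v₀ : Fin d → ℤ) (π : ℕ → Fin d → ℤ) : Prop :=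
  π 0 = v₀ ∧ Function.Injective π ∧ ∀ i, M.Adj ω (π i) (π (i + 1))

/-- Total cost of an infinite path. -/
def Data.infPathCost (M : Data d Ω) (f : ℝ → ℝ → ℝ) (ω : Ω)
    (π : ℕ → Fin d → ℤ) : ℝ≥0∞ :=
  ∑' i, ENNReal.ofReal (M.cost f ω (π i) (π (i + 1)))

/-- The set of neighbours of `v` joined to `v` by an edge of cost at most `t`;
`N₁^t(v)` is its cardinality. -/
def Data.cheapNbrs (M : Data d Ω) (f : ℝ → ℝ → ℝ) (ω : Ω) (v : Fin d → ℤ)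
    (t : ℝ) : Set (Fin d → ℤ) :=
  {u | M.Adj ω v u ∧ M.cost f ω v u ≤ t}

/-- Cumulative distribution function `F_L` of the edge-length variable `L`. -/
def Data.cdf (M : Data d Ω) : ℝ → ℝ := fun t => (M.P {ω | M.L ω ≤ t}).toReal

/-- `f` is the polynomial penalty function with coefficients `a` and exponents
`μe, νe` over the finite index set `I`. -/
def IsPolyPenalty {ι : Type} (f : ℝ → ℝ → ℝ) (I : Finset ι) (a μe νe : ι → ℝ) : Prop :=
  I.Nonempty ∧ (∀ i ∈ I, 0 < a i ∧ 0 ≤ μe i ∧ 0 ≤ νe i) ∧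
    ∀ w₁ w₂ : ℝ, 1 ≤ w₁ → 1 ≤ w₂ → f w₁ w₂ = ∑ i ∈ I, a i * w₁ ^ μe i * w₂ ^ νe i

/-- `degf` is the degree `max_{i∈I} (μ_i + ν_i)` of the polynomial penalty. -/
def IsPolyDeg {ι : Type} (I : Finset ι) (μe νe : ι → ℝ) (degf : ℝ) : Prop :=
  (∀ i ∈ I, μe i + νe i ≤ degf) ∧ ∃ i ∈ I, μe i + νe i = degf

end SFP

namespace SFPAux

open SFP

variable {Ω : Type*} [MeasurableSpace Ω] {μ : MeasureTheory.Measure Ω}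

lemma iIndepFun_precomp {κ ι' : Type*} {F : κ → Ω → ℝ}
    (hind : iIndepFun F μ)
    (e : ι' → κ) (he : Function.Injective e) :
    iIndepFun (fun p => F (e p)) μ := by
  classical
  rw [iIndepFun_iff_measure_inter_preimage_eq_mul] at hind ⊢
  intro S sets hsets
  set sets' : κ → Set ℝ := Function.extend e sets (fun _ => Set.univ) with hs'
  have hext : ∀ p, sets' (e p) = sets p := fun p => he.extend_apply _ _ _
  have h1 : (⋂ p ∈ S, (fun q => F (e q)) p ⁻¹' sets p) = ⋂ i ∈ S.image e, F i ⁻¹' sets' i := by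
    ext ω
    simp only [Set.mem_iInter, Finset.mem_image]
    constructor
    · rintro h i ⟨p, hp, rfl⟩
      rw [hext]; exact h p hp
    · intro h p hp
      have := h (e p) ⟨p, hp, rfl⟩
      rwa [hext] at this
  have h2 := hind (S.image e) (sets := sets') ?_
  · rw [h1, h2, Finset.prod_image (fun p _ q _ h => he h)]
    exact Finset.prod_congr rfl fun p _ => by rw [hext]
  · intro i hi
    rcases Finset.mem_image.1 hi with ⟨p, hp, rfl⟩
    rw [hext]; exact hsets p hp

lemma grouped_meas_biInter {G : ℕ × Fin 3 → Ω → ℝ}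
    (hind : iIndepFun G μ)
    (C : ℕ × Fin 3 → Set ℝ) (hC : ∀ p, MeasurableSet (C p)) (J : Finset ℕ) :
    μ (⋂ n ∈ J, ⋂ t : Fin 3, G (n, t) ⁻¹' C (n, t))
      = ∏ n ∈ J, ∏ t : Fin 3, μ (G (n, t) ⁻¹' C (n, t)) := by
  classical
  rw [iIndepFun_iff_measure_inter_preimage_eq_mul] at hind
  have h2 := hind (J ×ˢ (Finset.univ : Finset (Fin 3))) (sets := C) (fun p _ => hC p)
  have h1 : (⋂ p ∈ J ×ˢ (Finset.univ : Finset (Fin 3)), G p ⁻¹' C p)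
      = ⋂ n ∈ J, ⋂ t : Fin 3, G (n, t) ⁻¹' C (n, t) := by
    ext ω
    simp only [Set.mem_iInter, Finset.mem_product, Finset.mem_univ, and_true]
    exact ⟨fun h n hn t => h (n, t) hn, fun h p hp => h p.1 hp p.2⟩
  rw [← h1, h2, Finset.prod_product]

lemma triple_events {G : ℕ × Fin 3 → Ω → ℝ}
    (hind : iIndepFun G μ)
    (hG : ∀ p, Measurable (G p))
    (C : ℕ × Fin 3 → Set ℝ) (hC : ∀ p, MeasurableSet (C p)) :
    (∀ n : ℕ, μ (⋂ t : Fin 3, G (n, t) ⁻¹' C (n, t))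
        = ∏ t : Fin 3, μ (G (n, t) ⁻¹' C (n, t))) ∧
      iIndepSet (fun n => ⋂ t : Fin 3, G (n, t) ⁻¹' C (n, t)) μ := by
  have hmeas : ∀ n : ℕ, MeasurableSet (⋂ t : Fin 3, G (n, t) ⁻¹' C (n, t)) :=
    fun n => MeasurableSet.iInter fun t => (hG (n, t)) (hC (n, t))
  have hone : ∀ n : ℕ, μ (⋂ t : Fin 3, G (n, t) ⁻¹' C (n, t))
      = ∏ t : Fin 3, μ (G (n, t) ⁻¹' C (n, t)) := by
    intro n
    have := grouped_meas_biInter hind C hC {n}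
    simpa using this
  refine ⟨hone, ?_⟩
  rw [iIndepSet_iff_meas_biInter hmeas]
  intro s
  rw [grouped_meas_biInter hind C hC s]
  exact Finset.prod_congr rfl fun n _ => (hone n).symm

lemma rnorm_nonneg {d : ℕ} (x : Fin d → ℝ) : 0 ≤ rnorm x := Real.sqrt_nonneg _

lemma abs_le_rnorm {d : ℕ} (x : Fin d → ℝ) (i : Fin d) : |x i| ≤ rnorm x := by
  rw [rnorm, ← Real.sqrt_sq_eq_abs]
  exact Real.sqrt_le_sqrt (Finset.single_le_sum (fun j _ => sq_nonneg (x j)) (Finset.mem_univ i))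

lemma rnorm_le {d : ℕ} (x : Fin d → ℝ) (m : ℝ) (hm : 0 ≤ m) (h : ∀ i, |x i| ≤ m) :
    rnorm x ≤ d * m := by
  have hdm : (0:ℝ) ≤ (d:ℝ) * m := by positivity
  rw [rnorm, show (d:ℝ) * m = Real.sqrt (((d:ℝ) * m) ^ 2) from (Real.sqrt_sq hdm).symm]
  apply Real.sqrt_le_sqrt
  have h1 : ∑ i, x i ^ 2 ≤ ∑ _i : Fin d, m ^ 2 :=
    Finset.sum_le_sum fun i _ => by
      rw [← sq_abs]
      exact pow_le_pow_left₀ (abs_nonneg _) (h i) 2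
  have h2 : ∑ _i : Fin d, m ^ 2 = (d:ℝ) * m ^ 2 := by
    rw [Finset.sum_const, Finset.card_univ, Fintype.card_fin, nsmul_eq_mul]
  have h3 : (d:ℝ) ≤ (d:ℝ) ^ 2 := by
    exact_mod_cast Nat.le_self_pow two_ne_zero d
  nlinarith [sq_nonneg m]

lemma znorm_zero_sub {d : ℕ} (v : Fin d → ℤ) : znorm (0 - v) = znorm v := by
  unfold znorm rnorm
  congr 1
  apply Finset.sum_congr rfl
  intro i _
  show ((0 - v) i : ℝ) ^ 2 = ((v i : ℝ)) ^ 2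
  simp only [Pi.sub_apply, Pi.zero_apply, zero_sub]
  push_cast
  ring

lemma tsum_harmonic_top {c : ℝ} (hc : 0 < c) :
    ∑' n : ℕ, ENNReal.ofReal (c / ((n:ℝ) + 2)) = ⊤ := by
  by_contra hcon
  have hsum : Summable (fun n : ℕ => (c / ((n:ℝ) + 2)).toNNReal) := by
    rw [← ENNReal.tsum_coe_ne_top_iff_summable]
    exact hcon
  have hsum2 : Summable (fun n : ℕ => c / ((n:ℝ) + 2)) := by
    have := NNReal.summable_coe.2 hsum
    refine this.congr fun n => ?_
    exact Real.coe_toNNReal _ (by positivity)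
  have hsum3 : Summable (fun n : ℕ => 1 / ((n:ℝ) + 2)) := by
    have := hsum2.mul_left c⁻¹
    refine this.congr fun n => ?_
    field_simp
  have hsum4 : Summable (fun n : ℕ => 1 / ((n:ℝ) : ℝ)) := by
    rw [← summable_nat_add_iff 2]
    refine hsum3.congr fun n => ?_
    push_cast
    ring
  exact Real.not_summable_one_div_natCast hsum4

end SFPAux


/-- For SFP on `ℤ^d` with arbitrary weight distribution `W ≥ 1` and
long-range parameter `α ∈ (0,1]`: if the penalty function `f` is bounded by some
`K < ∞` on a product of weight intervals `[a,b] × [c,e]`, each of which is charged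
with positive probability by `W`, then for arbitrary edge-length distribution `L ≥ 0`
the model is `(f,L)`-explosive; moreover there is `T < ∞` such that with positive
probability the origin is incident to infinitely many edges of cost at most `T`. -/
theorem sfp_bounded_penalty_explosive
    {d : ℕ} (hd : 1 ≤ d) {Ω : Type*} [MeasurableSpace Ω] (M : SFP.Data d Ω)
    (hM : M.Valid)
    (α : ℝ≥0∞) (hα0 : 0 < α) (hα1 : α ≤ 1) (hEB : SFP.EdgeBounds M.h α)
    (f : ℝ → ℝ → ℝ) (hf : ∀ w₁ w₂ : ℝ, 1 ≤ w₁ → 1 ≤ w₂ → 0 < f w₁ w₂)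
    (a b c e : ℝ)
    (hab : 0 < M.P {ω | M.W ω ∈ Set.Icc a b})
    (hce : 0 < M.P {ω | M.W ω ∈ Set.Icc c e})
    (K : ℝ) (hK : ∀ w₁ ∈ Set.Icc a b, ∀ w₂ ∈ Set.Icc c e, f w₁ w₂ < K) :
    0 < M.P {ω | M.explosionTime f ω 0 < ⊤} ∧
      ∃ T : ℝ, 0 < M.P {ω | (M.cheapNbrs f ω 0 T).Infinite} := by
    classical
  obtain ⟨hP, hWm, hLm, hW1, hL0, hh01, hFm, hWt1, hLen0, hWtd, hUd, hLend, hind⟩ := hM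
  haveI : IsProbabilityMeasure M.P := hP
  obtain ⟨γ, cl, cu, cl1, cu1, c₂, hγ, hcl, hcu, hcl1, hcu1, hc₂, hdisj⟩ := hEB
  have hαtop : α ≠ ⊤ := by
    intro htp
    rw [htp] at hα1
    simp at hα1
  have hlow : ∀ x : Fin d → ℝ, x ≠ 0 → ∀ w₁ w₂ : ℝ, 1 ≤ w₁ → 1 ≤ w₂ →
      cl * min (SFP.lfun c₂ γ w₁ * SFP.lfun c₂ γ w₂)
        ((w₁ * w₂ / SFP.rnorm x ^ d) ^ α.toReal) ≤ M.h x w₁ w₂ := by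
    rcases hdisj with ⟨_, hb⟩ | ⟨htop, _⟩
    · exact fun x hx w₁ w₂ h1 h2 => (hb x hx w₁ w₂ h1 h2).1
    · exact absurd htop hαtop
  have hαt0 : 0 < α.toReal := ENNReal.toReal_pos hα0.ne' hαtop
  have hαt1 : α.toReal ≤ 1 := by
    have h := ENNReal.toReal_mono (by simp : (1:ℝ≥0∞) ≠ ⊤) hα1
    simpa using h
  -- witnesses for the weight intervals
  have hne1 : {ω | M.W ω ∈ Set.Icc a b}.Nonempty := by
    rw [Set.nonempty_iff_ne_empty]
    intro hemp
    rw [hemp] at hab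
    simp at hab
  have hne2 : {ω | M.W ω ∈ Set.Icc c e}.Nonempty := by
    rw [Set.nonempty_iff_ne_empty]
    intro hemp
    rw [hemp] at hce
    simp at hce
  obtain ⟨ω₁, hω₁⟩ := hne1
  obtain ⟨ω₂, hω₂⟩ := hne2
  have hω₁' : M.W ω₁ ∈ Set.Icc a b := hω₁
  have hω₂' : M.W ω₂ ∈ Set.Icc c e := hω₂
  set B₀ : ℝ := max 1 (max b e) with hB₀def
  have hB₀1 : (1:ℝ) ≤ B₀ := le_max_left _ _
  have hbB₀ : b ≤ B₀ := le_trans (le_max_left b e) (le_max_right 1 _)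
  have heB₀ : e ≤ B₀ := le_trans (le_max_right b e) (le_max_right 1 _)
  -- the basic lower-bound constant
  set m₀ : ℝ := min (SFP.lfun c₂ γ B₀ ^ 2) 1 with hm₀def
  have hlfun_pos : ∀ w : ℝ, 0 < SFP.lfun c₂ γ w := fun w => Real.exp_pos _
  have hm₀pos : 0 < m₀ := lt_min (pow_pos (hlfun_pos _) 2) one_pos
  have hm₀le1 : m₀ ≤ 1 := min_le_right _ _
  set c₀ : ℝ := cl * m₀ with hc₀def
  have hc₀pos : 0 < c₀ := mul_pos hcl hm₀pos
  have hlfun_anti : ∀ w w' : ℝ, 1 ≤ w → w ≤ w' → SFP.lfun c₂ γ w' ≤ SFP.lfun c₂ γ w := by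
    intro w w' h1 h2
    unfold SFP.lfun
    apply Real.exp_le_exp.2
    have hlog : Real.log w ≤ Real.log w' := Real.log_le_log (by linarith) h2
    have hlw : 0 ≤ Real.log w := Real.log_nonneg h1
    have hpow : Real.log w ^ γ ≤ Real.log w' ^ γ :=
      Real.rpow_le_rpow hlw hlog (le_of_lt hγ.1)
    nlinarith
  -- key pointwise estimate
  have key : ∀ w₁ w₂ r : ℝ, 1 ≤ w₁ → w₁ ≤ B₀ → 1 ≤ w₂ → w₂ ≤ B₀ → 1 ≤ r →
      c₀ / r ^ d ≤ cl * min (SFP.lfun c₂ γ w₁ * SFP.lfun c₂ γ w₂)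
        ((w₁ * w₂ / r ^ d) ^ α.toReal) := by
    intro w₁ w₂ r h11 h1B h21 h2B hr
    have hrd : (1:ℝ) ≤ r ^ d := one_le_pow₀ hr
    have hrdpos : (0:ℝ) < r ^ d := by positivity
    rw [hc₀def, mul_div_assoc]
    apply mul_le_mul_of_nonneg_left _ (le_of_lt hcl)
    apply le_min
    · calc m₀ / r ^ d ≤ m₀ := div_le_self (le_of_lt hm₀pos) hrd
        _ ≤ SFP.lfun c₂ γ B₀ ^ 2 := min_le_left _ _
        _ ≤ SFP.lfun c₂ γ w₁ * SFP.lfun c₂ γ w₂ := by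
            rw [sq]
            exact mul_le_mul (hlfun_anti _ _ h11 h1B) (hlfun_anti _ _ h21 h2B)
              (le_of_lt (hlfun_pos _)) (le_of_lt (hlfun_pos _))
    · have hx0 : (0:ℝ) < 1 / r ^ d := by positivity
      have hx1 : 1 / r ^ d ≤ 1 := by
        rw [div_le_one hrdpos]; exact hrd
      calc m₀ / r ^ d ≤ 1 / r ^ d := by gcongr
        _ ≤ (1 / r ^ d) ^ α.toReal := by
            have h := Real.rpow_le_rpow_of_exponent_ge hx0 hx1 hαt1
            rwa [Real.rpow_one] at h
        _ ≤ ((w₁ * w₂) / r ^ d) ^ α.toReal := by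
            apply Real.rpow_le_rpow (le_of_lt hx0) _ (le_of_lt hαt0)
            gcongr
            nlinarith
  -- the family of vertices
  have hfin : ∀ n : ℕ, (0:ℕ) < n + 2 := fun n => by omega
  set V : (Σ n : ℕ, (Fin (d-1) → Fin (n+2))) → (Fin d → ℤ) :=
    fun j i => if h : (i : ℕ) = 0 then ((j.1 : ℤ) + 2)
      else (j.2 ⟨(i:ℕ) - 1, by have := i.isLt; omega⟩ : ℤ) with hVdef
  set i0 : Fin d := ⟨0, hd⟩ with hi0def
  have hV0 : ∀ j, V j i0 = (j.1 : ℤ) + 2 := fun j => by simp [hVdef, hi0def]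
  have hVbound : ∀ j i, |(V j i : ℝ)| ≤ (j.1 : ℝ) + 2 := by
    intro j i
    by_cases h : (i:ℕ) = 0
    · rw [hVdef]
      simp only [h, dif_pos]
      rw [abs_of_nonneg (by push_cast; positivity)]
      push_cast; linarith
    · rw [hVdef]
      simp only [h, dif_neg, not_false_iff]
      have hlt := (j.2 ⟨(i:ℕ) - 1, by have := i.isLt; omega⟩).isLt
      rw [abs_of_nonneg (by positivity)]
      push_cast
      have : ((j.2 ⟨(i:ℕ) - 1, by have := i.isLt; omega⟩ : ℕ) : ℝ) < (j.1:ℝ) + 2 := by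
        exact_mod_cast hlt
      linarith
  have hVsucc : ∀ (j : Σ n : ℕ, (Fin (d-1) → Fin (n+2))) (m : Fin (d-1)),
      V j ⟨(m:ℕ)+1, by have := m.isLt; omega⟩ = (j.2 m : ℤ) := by
    intro j m
    simp only [hVdef]
    rw [dif_neg (by simp)]
    have hfin_eq : (⟨(m:ℕ) + 1 - 1, by have := m.isLt; omega⟩ : Fin (d-1)) = m := by
      apply Fin.ext; simp
    rw [hfin_eq]
  have hVinj : Function.Injective V := by
    rintro ⟨n, k⟩ ⟨n', k'⟩ hjj
    have h1 : n = n' := by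
      have h := congrFun hjj i0
      rw [show V ⟨n,k⟩ i0 = (n:ℤ)+2 from hV0 ⟨n,k⟩,
          show V ⟨n',k'⟩ i0 = (n':ℤ)+2 from hV0 ⟨n',k'⟩] at h
      omega
    subst h1
    have h3 : k = k' := by
      funext m
      have h2 := congrFun hjj (⟨(m:ℕ)+1, by have := m.isLt; omega⟩ : Fin d)
      rw [hVsucc ⟨n,k⟩ m, hVsucc ⟨n,k'⟩ m] at h2
      exact Fin.ext (by exact_mod_cast h2)
    rw [h3]
  have hzlow : ∀ j, ((j.1:ℝ) + 2) ≤ SFP.znorm (V j) := by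
    intro j
    have h := SFPAux.abs_le_rnorm (fun i => ((V j i : ℤ) : ℝ)) i0
    rw [show ((V j i0 : ℤ) : ℝ) = (j.1:ℝ) + 2 by rw [hV0]; push_cast; ring] at h
    calc ((j.1:ℝ) + 2) ≤ |(j.1:ℝ) + 2| := le_abs_self _
      _ ≤ _ := h
  have hzhigh : ∀ j, SFP.znorm (V j) ≤ (d:ℝ) * ((j.1:ℝ) + 2) :=
    fun j => SFPAux.rnorm_le _ _ (by positivity) (hVbound j)
  have hz1 : ∀ j, (1:ℝ) ≤ SFP.znorm (V j) := fun j => by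
    have := hzlow j; have : (0:ℝ) ≤ (j.1:ℝ) := Nat.cast_nonneg _; linarith [hzlow j]
  have hVne : ∀ j, V j ≠ 0 := by
    intro j hj
    have := congrFun hj i0
    rw [hV0] at this
    simp at this
    omega
  -- enumeration of the vertex family
  haveI : Infinite (Σ n : ℕ, (Fin (d-1) → Fin (n+2))) :=
    Infinite.of_injective (fun n : ℕ => (⟨n, fun _ => ⟨0, hfin n⟩⟩ : Σ n : ℕ, (Fin (d-1) → Fin (n+2))))
      (fun n m h => congrArg Sigma.fst h)
  obtain ⟨denum⟩ := nonempty_denumerable (Σ n : ℕ, (Fin (d-1) → Fin (n+2)))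
  set eqv : ℕ ≃ (Σ n : ℕ, (Fin (d-1) → Fin (n+2))) := (@Denumerable.eqv _ denum).symm with heqv
  set VV : ℕ → (Fin d → ℤ) := fun n => V (eqv n) with hVVdef
  have hVVinj : Function.Injective VV := hVinj.comp eqv.injective
  have hVVne : ∀ n, VV n ≠ 0 := fun n => hVne _
  -- choice of the length bound
  have hex_t : ∃ m : ℕ, 0 < M.P {ω | M.L ω ≤ (m:ℝ)} := by
    by_contra hcon
    push_neg at hcon
    have hz : ∀ m : ℕ, M.P {ω | M.L ω ≤ (m:ℝ)} = 0 :=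
      fun m => le_antisymm (hcon m) zero_le
    have huniv : (⋃ m : ℕ, {ω | M.L ω ≤ (m:ℝ)}) = Set.univ := by
      ext ω
      simp only [Set.mem_iUnion, Set.mem_setOf_eq, Set.mem_univ, iff_true]
      exact exists_nat_ge (M.L ω)
    have hle := measure_iUnion_le (μ := M.P) (fun m : ℕ => {ω | M.L ω ≤ (m:ℝ)})
    rw [huniv] at hle
    simp only [hz, tsum_zero, measure_univ] at hle
    exact absurd hle (by simp)
  obtain ⟨m₁, hm₁⟩ := hex_t
  set t₀ : ℝ := (m₁ : ℝ) with ht₀def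
  have ht₀0 : (0:ℝ) ≤ t₀ := Nat.cast_nonneg _
  set pc : ℝ≥0∞ := M.P {ω | M.W ω ∈ Set.Icc c e} with hpcdef
  set pL : ℝ≥0∞ := M.P {ω | M.L ω ≤ t₀} with hpLdef
  -- the probabilities q n
  set q : ℕ → ℝ := fun n => c₀ / SFP.znorm (VV n) ^ d with hqdef
  have hq0 : ∀ n, 0 < q n := by
    intro n
    apply div_pos hc₀pos
    have := hz1 (eqv n)
    positivity
  have hq1 : ∀ n, q n ≤ 1 := by
    intro n
    set w₁ := M.W ω₁
    set w₂ := M.W ω₂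
    have h11 : 1 ≤ w₁ := hW1 ω₁
    have h21 : 1 ≤ w₂ := hW1 ω₂
    have hkey := key w₁ w₂ (SFP.znorm (VV n)) h11 (le_trans hω₁'.2 hbB₀) h21
      (le_trans hω₂'.2 heB₀) (hz1 (eqv n))
    have hxne : (fun i => ((VV n) i : ℝ)) ≠ 0 := by
      intro hx
      have hcf : ((VV n) i0 : ℝ) = 0 := congrFun hx i0
      rw [show (VV n) i0 = ((eqv n).1 : ℤ) + 2 from hV0 _] at hcf
      push_cast at hcf
      have := Nat.cast_nonneg (α := ℝ) (eqv n).1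
      linarith
    have hrn : SFP.rnorm (fun i => ((VV n) i : ℝ)) = SFP.znorm (VV n) := rfl
    have hlb := hlow (fun i => ((VV n) i : ℝ)) hxne w₁ w₂ h11 h21
    rw [hrn] at hlb
    have hub := (hh01 (fun i => ((VV n) i : ℝ)) w₁ w₂).2
    exact le_trans hkey (le_trans hlb hub)
  -- the events
  set g : ℕ → Fin 3 → SFP.Idx d := fun n t =>
    if (t:ℕ) = 0 then SFP.Idx.unif s(0, VV n)
    else if (t:ℕ) = 1 then SFP.Idx.wt (VV n)
    else SFP.Idx.len s(0, VV n) with hgdef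
  have hsym_inj : ∀ n m : ℕ, s((0 : Fin d → ℤ), VV n) = s((0 : Fin d → ℤ), VV m) → n = m := by
    intro n m h
    rw [Sym2.eq_iff] at h
    rcases h with ⟨-, h2⟩ | ⟨h1, -⟩
    · exact hVVinj h2
    · exact absurd h1.symm (hVVne m)
  have hcase : ∀ n m : ℕ, ∀ t s : Fin 3, g n t = g m s → n = m ∧ (t:ℕ) = (s:ℕ) := by
    intro n m t s hpq
    rcases t with ⟨tv, htv⟩
    rcases s with ⟨sv, hsv⟩
    interval_cases tv <;> interval_cases sv
    · have hpq' : SFP.Idx.unif s((0 : Fin d → ℤ), VV n)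
          = SFP.Idx.unif s((0 : Fin d → ℤ), VV m) := hpq
      injection hpq' with h
      exact ⟨hsym_inj _ _ h, rfl⟩
    · have hpq' : SFP.Idx.unif s((0 : Fin d → ℤ), VV n) = SFP.Idx.wt (VV m) := hpq
      cases hpq'
    · have hpq' : SFP.Idx.unif s((0 : Fin d → ℤ), VV n)
          = SFP.Idx.len s((0 : Fin d → ℤ), VV m) := hpq
      cases hpq'
    · have hpq' : SFP.Idx.wt (VV n) = SFP.Idx.unif s((0 : Fin d → ℤ), VV m) := hpq
      cases hpq'
    · have hpq' : SFP.Idx.wt (VV n) = SFP.Idx.wt (VV m) := hpq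
      injection hpq' with h
      exact ⟨hVVinj h, rfl⟩
    · have hpq' : SFP.Idx.wt (VV n) = SFP.Idx.len s((0 : Fin d → ℤ), VV m) := hpq
      cases hpq'
    · have hpq' : SFP.Idx.len s((0 : Fin d → ℤ), VV n)
          = SFP.Idx.unif s((0 : Fin d → ℤ), VV m) := hpq
      cases hpq'
    · have hpq' : SFP.Idx.len s((0 : Fin d → ℤ), VV n) = SFP.Idx.wt (VV m) := hpq
      cases hpq'
    · have hpq' : SFP.Idx.len s((0 : Fin d → ℤ), VV n)
          = SFP.Idx.len s((0 : Fin d → ℤ), VV m) := hpq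
      injection hpq' with h
      exact ⟨hsym_inj _ _ h, rfl⟩
  have hginj : Function.Injective (fun p : ℕ × Fin 3 => g p.1 p.2) := by
    rintro ⟨n, t⟩ ⟨m, s⟩ hpq
    obtain ⟨h1, h2⟩ := hcase n m t s hpq
    subst h1
    rw [show t = s from Fin.ext h2]
  set G : ℕ × Fin 3 → Ω → ℝ := fun p => M.family (g p.1 p.2) with hGdef
  have hGind : iIndepFun G M.P :=
    SFPAux.iIndepFun_precomp hind (fun p : ℕ × Fin 3 => g p.1 p.2) hginj
  have hGm : ∀ p, Measurable (G p) := fun p => hFm _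
  set C : ℕ × Fin 3 → Set ℝ := fun p =>
    if (p.2:ℕ) = 0 then Set.Iic (q p.1)
    else if (p.2:ℕ) = 1 then Set.Icc c e
    else Set.Iic t₀ with hCdef
  have hCm : ∀ p, MeasurableSet (C p) := by
    rintro ⟨n, t⟩
    fin_cases t <;> simp [hCdef] <;>
      first
        | exact measurableSet_Iic
        | exact measurableSet_Icc
  obtain ⟨hBprod, hBindep⟩ := SFPAux.triple_events hGind hGm C hCm
  set B : ℕ → Set Ω := fun n => ⋂ t : Fin 3, G (n, t) ⁻¹' C (n, t) with hBdef
  have hBmeas : ∀ n, MeasurableSet (B n) :=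
    fun n => MeasurableSet.iInter fun t => (hGm (n, t)) (hCm (n, t))
  have hg0 : ∀ n, g n 0 = SFP.Idx.unif s(0, VV n) := fun n => rfl
  have hg1 : ∀ n, g n 1 = SFP.Idx.wt (VV n) := fun n => rfl
  have hg2 : ∀ n, g n 2 = SFP.Idx.len s(0, VV n) := fun n => rfl
  have hBmem : ∀ n ω, ω ∈ B n ↔
      (M.U s(0, VV n) ω ≤ q n ∧ M.Wt (VV n) ω ∈ Set.Icc c e ∧ M.Len s(0, VV n) ω ≤ t₀) := by
    intro n ω
    rw [hBdef]
    simp only [Set.mem_iInter, Set.mem_preimage]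
    constructor
    · intro h
      refine ⟨h 0, h 1, h 2⟩
    · rintro ⟨h0, h1, h2⟩ t
      fin_cases t
      · exact h0
      · exact h1
      · exact h2
  -- single-event probabilities
  have hnd : ∀ n, ¬(s((0 : Fin d → ℤ), VV n)).IsDiag := by
    intro n h
    rw [Sym2.mk_isDiag_iff] at h
    exact hVVne n h.symm
  have hPU : ∀ n, M.P (G (n, 0) ⁻¹' C (n, 0)) = ENNReal.ofReal (q n) := by
    intro n
    have h1 : M.P (G (n, 0) ⁻¹' C (n, 0))
        = Measure.map (M.U s(0, VV n)) M.P (Set.Iic (q n)) := by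
      have hUm : Measurable (M.U s(0, VV n)) := hFm (SFP.Idx.unif s(0, VV n))
      rw [Measure.map_apply hUm measurableSet_Iic]
      rfl
    rw [h1, hUd _ (hnd n)]
    rw [Measure.restrict_apply measurableSet_Iic]
    have h2 : Set.Iic (q n) ∩ Set.Icc (0:ℝ) 1 = Set.Icc 0 (q n) := by
      ext x
      simp only [Set.mem_inter_iff, Set.mem_Iic, Set.mem_Icc]
      constructor
      · rintro ⟨ha1, ha2, ha3⟩; exact ⟨ha2, ha1⟩
      · rintro ⟨ha1, ha2⟩; exact ⟨ha2, ha1, le_trans ha2 (hq1 n)⟩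
    rw [h2, Real.volume_Icc, sub_zero]
  have hPW : ∀ n, M.P (G (n, 1) ⁻¹' C (n, 1)) = pc := by
    intro n
    have h1 : M.P (G (n, 1) ⁻¹' C (n, 1))
        = Measure.map (M.Wt (VV n)) M.P (Set.Icc c e) := by
      have hWtm : Measurable (M.Wt (VV n)) := hFm (SFP.Idx.wt (VV n))
      rw [Measure.map_apply hWtm measurableSet_Icc]
      rfl
    rw [h1, hWtd (VV n), Measure.map_apply hWm measurableSet_Icc]
    rfl
  have hPL : ∀ n, M.P (G (n, 2) ⁻¹' C (n, 2)) = pL := by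
    intro n
    have h1 : M.P (G (n, 2) ⁻¹' C (n, 2))
        = Measure.map (M.Len s(0, VV n)) M.P (Set.Iic t₀) := by
      have hLenm : Measurable (M.Len s(0, VV n)) := hFm (SFP.Idx.len s(0, VV n))
      rw [Measure.map_apply hLenm measurableSet_Iic]
      rfl
    rw [h1, hLend _ (hnd n), Measure.map_apply hLm measurableSet_Iic]
    rfl
  have hPB : ∀ n, M.P (B n) = ENNReal.ofReal (q n) * pc * pL := by
    intro n
    rw [show M.P (B n) = M.P (⋂ t : Fin 3, G (n, t) ⁻¹' C (n, t)) from rfl]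
    rw [hBprod n, Fin.prod_univ_three, hPU, hPW, hPL]
  -- divergence of the sum
  have hsumtop : (∑' n : ℕ, M.P (B n)) = ⊤ := by
    have hq_eq : ∀ n, M.P (B n) = ENNReal.ofReal (q n) * pc * pL := hPB
    calc (∑' n : ℕ, M.P (B n)) = ∑' n : ℕ, ENNReal.ofReal (q n) * pc * pL := by
          exact tsum_congr hq_eq
      _ = (∑' n : ℕ, ENNReal.ofReal (q n)) * pc * pL := by
          rw [ENNReal.tsum_mul_right, ENNReal.tsum_mul_right]
      _ = ⊤ := by
          have hqt : (∑' n : ℕ, ENNReal.ofReal (q n)) = ⊤ := by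
            have hiso : (∑' n : ℕ, ENNReal.ofReal (q n))
                = ∑' j : (Σ n : ℕ, (Fin (d-1) → Fin (n+2))),
                    ENNReal.ofReal (c₀ / SFP.znorm (V j) ^ d) := by
              rw [← Equiv.tsum_eq eqv (fun j => ENNReal.ofReal (c₀ / SFP.znorm (V j) ^ d))]
            rw [hiso]
            rw [← top_le_iff]
            have hterm : ∀ j : (Σ n : ℕ, (Fin (d-1) → Fin (n+2))),
                ENNReal.ofReal (c₀ / ((d:ℝ) * ((j.1:ℝ) + 2)) ^ d)
                  ≤ ENNReal.ofReal (c₀ / SFP.znorm (V j) ^ d) := by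
              intro j
              apply ENNReal.ofReal_le_ofReal
              have h1 : (0:ℝ) < SFP.znorm (V j) ^ d := by
                have := hz1 j; positivity
              apply div_le_div_of_nonneg_left (le_of_lt hc₀pos) h1
              apply pow_le_pow_left₀ (by have := hz1 j; linarith) (hzhigh j)
            refine le_trans ?_ (ENNReal.tsum_le_tsum hterm)
            have hinner : ∀ n : ℕ, (∑' _k : Fin (d-1) → Fin (n+2),
                ENNReal.ofReal (c₀ / ((d:ℝ) * ((n:ℝ) + 2)) ^ d))
                  = ENNReal.ofReal ((c₀ / (d:ℝ) ^ d) / ((n:ℝ) + 2)) := by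
              intro n
              rw [tsum_fintype, Finset.sum_const, Finset.card_univ, Fintype.card_fun,
                Fintype.card_fin, Fintype.card_fin, nsmul_eq_mul]
              rw [show (((n+2) ^ (d-1) : ℕ) : ℝ≥0∞)
                  = ENNReal.ofReal (((n:ℝ) + 2) ^ (d-1)) by
                rw [← ENNReal.ofReal_natCast]
                congr 1
                push_cast
                ring]
              rw [← ENNReal.ofReal_mul (by positivity)]
              congr 1
              have hd2 : ((n:ℝ) + 2) ≠ 0 := by positivity
              have hdr : (d:ℝ) ≠ 0 := by
                have : (1:ℝ) ≤ (d:ℝ) := by exact_mod_cast hd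
                linarith
              have hsplit : ((n:ℝ) + 2) ^ d = ((n:ℝ) + 2) ^ (d-1) * ((n:ℝ) + 2) := by
                rw [← pow_succ]
                congr 1
                omega
              rw [mul_pow, hsplit]
              field_simp
            have hstep : (∑' j : (Σ n : ℕ, (Fin (d-1) → Fin (n+2))),
                ENNReal.ofReal (c₀ / ((d:ℝ) * ((j.1:ℝ) + 2)) ^ d))
                = ∑' n : ℕ, ENNReal.ofReal ((c₀ / (d:ℝ) ^ d) / ((n:ℝ) + 2)) := by
              rw [ENNReal.tsum_sigma' (fun j : (Σ n : ℕ, (Fin (d-1) → Fin (n+2))) =>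
                ENNReal.ofReal (c₀ / ((d:ℝ) * ((j.1:ℝ) + 2)) ^ d))]
              exact tsum_congr fun n => hinner n
            rw [hstep, SFPAux.tsum_harmonic_top (by positivity)]
          rw [hqt]
          rw [ENNReal.top_mul (by rw [hpcdef]; exact hce.ne'), ENNReal.top_mul]
          rw [hpLdef]
          exact hm₁.ne'
  -- Borel–Cantelli
  have hlim := ProbabilityTheory.measure_limsup_eq_one hBmeas hBindep hsumtop
  set A : Set Ω := (M.Wt 0) ⁻¹' (Set.Icc a b) with hAdef
  have hPA : M.P A = M.P {ω | M.W ω ∈ Set.Icc a b} := by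
    have h1 : M.P A = Measure.map (M.Wt 0) M.P (Set.Icc a b) := by
      have hWt0m : Measurable (M.Wt (0 : Fin d → ℤ)) := hFm (SFP.Idx.wt 0)
      rw [Measure.map_apply hWt0m measurableSet_Icc]
    rw [h1, hWtd 0, Measure.map_apply hWm measurableSet_Icc]
    rfl
  have hGpos : 0 < M.P (A ∩ limsup B atTop) := by
    have hms : MeasurableSet (limsup B atTop) := MeasurableSet.measurableSet_limsup hBmeas
    have hcompl : M.P ((limsup B atTop)ᶜ) = 0 := by
      rw [measure_compl hms (measure_ne_top _ _), hlim]
      simp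
    have hsplit : M.P A ≤ M.P (A ∩ limsup B atTop) + M.P ((limsup B atTop)ᶜ) := by
      refine le_trans (measure_mono ?_) (measure_union_le _ _)
      intro ω hω
      by_cases h : ω ∈ limsup B atTop
      · exact Or.inl ⟨hω, h⟩
      · exact Or.inr h
    rw [hcompl, add_zero, hPA] at hsplit
    exact lt_of_lt_of_le hab hsplit
  set T : ℝ := t₀ * K with hTdef
  -- good event gives infinitely many cheap neighbours
  have hsubset : A ∩ limsup B atTop ⊆ {ω | (M.cheapNbrs f ω 0 T).Infinite} := by
    rintro ω ⟨hA, hLim⟩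
    have hAw : M.Wt 0 ω ∈ Set.Icc a b := hA
    have hfreq : {n : ℕ | ω ∈ B n}.Infinite := by
      rw [← Nat.frequently_atTop_iff_infinite]
      exact mem_limsup_iff_frequently_mem.1 hLim
    have himg : (VV '' {n | ω ∈ B n}).Infinite :=
      Set.Infinite.image (Set.injOn_of_injective hVVinj) hfreq
    refine Set.Infinite.mono ?_ himg
    rintro u ⟨n, hn, rfl⟩
    obtain ⟨hu, hw, hl⟩ := (hBmem n ω).1 hn
    have hwt0 : 1 ≤ M.Wt 0 ω := hWt1 0 ω
    have hwtn : 1 ≤ M.Wt (VV n) ω := hWt1 (VV n) ω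
    have hz2 : (2:ℝ) ≤ SFP.znorm (VV n) := by
      have := hzlow (eqv n)
      have h0 : (0:ℝ) ≤ ((eqv n).1 : ℝ) := Nat.cast_nonneg _
      linarith
    have hzz : SFP.znorm (0 - VV n) = SFP.znorm (VV n) := SFPAux.znorm_zero_sub _
    constructor
    · -- adjacency
      right
      constructor
      · rw [hzz]; linarith
      · refine le_trans hu ?_
        have hxne : (fun i => (((0 - VV n) : Fin d → ℤ) i : ℝ)) ≠ 0 := by
          intro hx
          have hcf := congrFun hx i0
          have hv0 : ((0 - VV n) : Fin d → ℤ) i0 = -(((eqv n).1 : ℤ) + 2) := by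
            simp only [Pi.sub_apply, Pi.zero_apply, zero_sub]
            rw [show (VV n) i0 = ((eqv n).1 : ℤ) + 2 from hV0 _]
          rw [hv0] at hcf
          simp only [Pi.zero_apply] at hcf
          push_cast at hcf
          have := Nat.cast_nonneg (α := ℝ) (eqv n).1
          linarith
        have hlb := hlow (fun i => (((0 - VV n) : Fin d → ℤ) i : ℝ)) hxne
          (M.Wt 0 ω) (M.Wt (VV n) ω) hwt0 hwtn
        have hrn : SFP.rnorm (fun i => (((0 - VV n) : Fin d → ℤ) i : ℝ))
            = SFP.znorm (VV n) := by
          rw [show SFP.rnorm (fun i => (((0 - VV n) : Fin d → ℤ) i : ℝ))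
              = SFP.znorm (0 - VV n) from rfl, hzz]
        rw [hrn] at hlb
        refine le_trans ?_ hlb
        exact key (M.Wt 0 ω) (M.Wt (VV n) ω) (SFP.znorm (VV n)) hwt0
          (le_trans hAw.2 hbB₀) hwtn (le_trans hw.2 heB₀) (by linarith)
    · -- cost bound
      have hfK : f (M.Wt 0 ω) (M.Wt (VV n) ω) < K := hK _ hAw _ hw
      have hf0 : 0 < f (M.Wt 0 ω) (M.Wt (VV n) ω) := hf _ _ hwt0 hwtn
      have hlen0 : 0 ≤ M.Len s(0, VV n) ω := hLen0 _ ω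
      calc M.Len s(0, VV n) ω * f (M.Wt 0 ω) (M.Wt (VV n) ω)
          ≤ t₀ * K := mul_le_mul hl (le_of_lt hfK) (le_of_lt hf0) ht₀0
        _ = T := rfl
  -- cheap neighbours give finite explosion time
  have hsubset2 : {ω | (M.cheapNbrs f ω 0 T).Infinite}
      ⊆ {ω | M.explosionTime f ω 0 < ⊤} := by
    intro ω hω
    simp only [Set.mem_setOf_eq] at hω ⊢
    have hle : M.explosionTime f ω 0 ≤ ENNReal.ofReal T := by
      refine iSup_le fun k => ?_
      obtain ⟨S, hSsub, hScard⟩ := hω.exists_subset_card_eq (k+1)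
      refine sInf_le ⟨S, by omega, fun u hu => ?_⟩
      have huC : u ∈ M.cheapNbrs f ω 0 T := hSsub hu
      obtain ⟨hadj, hcost⟩ := huC
      have hune : (0 : Fin d → ℤ) ≠ u := by
        intro h0
        rcases hadj with h1 | ⟨h1, -⟩
        · rw [← h0] at h1
          simp only [sub_self] at h1
          have : SFP.znorm (0 : Fin d → ℤ) = 0 := by
            unfold SFP.znorm SFP.rnorm
            simp
          rw [this] at h1
          norm_num at h1
        · rw [← h0] at h1
          simp only [sub_self] at h1
          have : SFP.znorm (0 : Fin d → ℤ) = 0 := by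
            unfold SFP.znorm SFP.rnorm
            simp
          rw [this] at h1
          norm_num at h1
      set π : ℕ → Fin d → ℤ := fun m => if m = 0 then 0 else u with hπdef
      have hp0 : π 0 = 0 := if_pos rfl
      have hp1 : π 1 = u := if_neg one_ne_zero
      have hseg : M.IsPathSeg ω 1 π := by
        constructor
        · intro i hi
          interval_cases i
          rw [show π 0 = 0 from hp0, show π 1 = u from hp1]
          exact hadj
        · intro i j hi hj hij
          interval_cases i <;> interval_cases j <;> first
            | rfl
            | (exfalso
               rw [hp0, hp1] at hij
               first
                 | exact hune hij
                 | exact hune hij.symm)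
      have hcd : M.costDist f ω 0 u ≤ M.pathCost f ω 1 π := by
        refine iInf_le_of_le 1 (iInf_le_of_le π ?_)
        refine iInf_le_of_le hp0 (iInf_le_of_le hp1 ?_)
        exact iInf_le _ hseg
      have hpc : M.pathCost f ω 1 π = ENNReal.ofReal (M.cost f ω 0 u) := by
        unfold SFP.Data.pathCost
        rw [Finset.sum_range_one, hp0, hp1]
      calc M.costDist f ω 0 u ≤ M.pathCost f ω 1 π := hcd
        _ = ENNReal.ofReal (M.cost f ω 0 u) := hpc
        _ ≤ ENNReal.ofReal T := ENNReal.ofReal_le_ofReal hcost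
    exact lt_of_le_of_lt hle ENNReal.ofReal_lt_top
  constructor
  · exact lt_of_lt_of_le hGpos (le_trans (measure_mono hsubset) (measure_mono hsubset2))
  · exact ⟨T, lt_of_lt_of_le hGpos (measure_mono hsubset)⟩
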